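/- The map sending h ∈ H(G,H) to the endomorphism e_h : φ ↦ φ ⋆ h of C_c(G/H) is a bijection from H(G,H) onto the set of ℤ-linear endomorphisms of C_c(G/H) that commute with the left translation action of G, and it satisfies e_{h₁ ⋆ h₂} = e_{h₂} ∘ e_{h₁}; in other words, H(G,H) is isomorphic as a ring to the opposite ring of the ring of ℤ[G]-equivariant endomorphisms of C_c(G/H). -/

import Mathlib

open scoped Pointwise

/-! ## Setting

`G` is a group and `H` a subgroup such that every double coset `HgH` is a finite union of
left cosets of `H`.  `H(G,H)` is the ring of bi-`H`-invariant `ℤ`-valued functions on `G`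
supported on finitely many double cosets, with convolution
`(f ⋆ f')(x) = Σ_{yH ∈ G/H} f(y)·f'(y⁻¹x)`; `C_c(G/H)` is the `ℤ`-module of right
`H`-invariant functions `G → ℤ` supported on finitely many left cosets, with `G` acting by
left translations `(g·φ)(x) = φ(g⁻¹x)` and with the right `H(G,H)`-action `φ ⋆ h` given by
the same convolution formula. -/

/-- The convolution `(f ⋆ f')(x) = Σ_{yH ∈ G/H} f(y)·f'(y⁻¹x)` (values at a left coset being
computed at a chosen representative). -/
noncomputable def hconv {G : Type} [Group G] (H : Subgroup G) (f f' : G → ℤ) : G → ℤ :=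
  fun x => ∑ᶠ y : G ⧸ H, f (Quotient.out y) * f' ((Quotient.out y)⁻¹ * x)

/-- `f : G → ℤ` is an element of the Hecke ring `H(G,H)`: left and right `H`-invariant and
vanishing outside finitely many double cosets of `H`. -/
def IsHeckeElt {G : Type} [Group G] (H : Subgroup G) (f : G → ℤ) : Prop :=
  (∀ h ∈ H, ∀ g : G, f (h * g) = f g) ∧ (∀ h ∈ H, ∀ g : G, f (g * h) = f g) ∧
    ∃ C : Finset G, ∀ g : G, f g ≠ 0 → ∃ c ∈ C, g ∈ (H : Set G) * {c} * (H : Set G)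

/-- `φ : G → ℤ` is an element of `C_c(G/H)`: right `H`-invariant and vanishing outside
finitely many left cosets of `H`. -/
def IsCc {G : Type} [Group G] (H : Subgroup G) (φ : G → ℤ) : Prop :=
  (∀ h ∈ H, ∀ g : G, φ (g * h) = φ g) ∧ {y : G ⧸ H | φ (Quotient.out y) ≠ 0}.Finite
section Aux
open scoped Classical
variable {G : Type} [Group G] {H : Subgroup G}

open Classical in
/-- indicator of the coset `gH`. -/
noncomputable def hind (H : Subgroup G) (g x : G) : ℤ := if g⁻¹ * x ∈ H then 1 else 0

lemma hind_out (g : G) (y : G ⧸ H) :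
    hind H g (Quotient.out y) = if y = QuotientGroup.mk g then 1 else 0 := by
  have key : g⁻¹ * Quotient.out y ∈ H ↔ y = QuotientGroup.mk g := by
    rw [← QuotientGroup.eq, QuotientGroup.out_eq', eq_comm]
  unfold hind
  exact if_congr key rfl rfl

lemma isCc_hind (g : G) : IsCc H (hind H g) := by
  constructor
  · intro h hh x
    have key : g⁻¹ * (x * h) ∈ H ↔ g⁻¹ * x ∈ H := by
      rw [← mul_assoc]; exact mul_mem_cancel_right hh
    unfold hind
    exact if_congr key rfl rfl
  · apply Set.Finite.subset (Set.finite_singleton (QuotientGroup.mk g : G ⧸ H))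
    intro y hy
    simp only [Set.mem_setOf_eq, hind_out] at hy
    by_contra hne
    simp only [Set.mem_singleton_iff] at hne
    simp [hne] at hy

lemma hind_one_left_inv (h : G) (hh : h ∈ H) (x : G) : hind H 1 (h * x) = hind H 1 x := by
  have key : (1 : G)⁻¹ * (h * x) ∈ H ↔ (1 : G)⁻¹ * x ∈ H := by
    rw [inv_one, one_mul, one_mul]; exact mul_mem_cancel_left hh
  unfold hind
  exact if_congr key rfl rfl

/-- the key invariance of the convolution term under change of representative. -/
lemma term_eq {φ f : G → ℤ} (hφ : ∀ h ∈ H, ∀ g : G, φ (g * h) = φ g)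
    (hf : ∀ h ∈ H, ∀ g : G, f (h * g) = f g) {a b : G}
    (hab : (QuotientGroup.mk a : G ⧸ H) = QuotientGroup.mk b) (x : G) :
    φ a * f (a⁻¹ * x) = φ b * f (b⁻¹ * x) := by
  have hm : a⁻¹ * b ∈ H := QuotientGroup.eq.mp hab
  have h1 : φ b = φ a := by
    have := hφ _ hm a
    rw [← this]; congr 1; group
  have h2 : f (b⁻¹ * x) = f (a⁻¹ * x) := by
    have := hf _ (inv_mem hm) (a⁻¹ * x)
    rw [← this]; congr 1; group
  rw [h1, h2]

lemma supp_subset (φ f : G → ℤ) (x : G) :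
    Function.support (fun y : G ⧸ H => φ (Quotient.out y) * f ((Quotient.out y)⁻¹ * x)) ⊆
      {y : G ⧸ H | φ (Quotient.out y) ≠ 0} := by
  intro y hy h0
  exact hy (by simp [h0])

lemma hconv_hind_one {f : G → ℤ} (hf : ∀ h ∈ H, ∀ g : G, f (h * g) = f g) :
    hconv H (hind H 1) f = f := by
  funext x
  unfold hconv
  rw [finsum_eq_single _ (((1 : G) : G ⧸ H))]
  · have h1 : Quotient.out (((1 : G) : G ⧸ H)) ∈ H := by
      have := QuotientGroup.eq.mp (QuotientGroup.out_eq' (((1 : G) : G ⧸ H)))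
      simpa using this
    have h2 : hind H 1 (Quotient.out (((1 : G) : G ⧸ H))) = 1 := by
      simp [hind, h1]
    rw [h2, one_mul, hf _ (inv_mem h1)]
  · intro y hy
    rw [hind_out]
    simp [hy]

lemma isCc_hconv (hfin : ∀ g : G,
      (QuotientGroup.mk '' ((H : Set G) * {g} * (H : Set G)) : Set (G ⧸ H)).Finite)
    {f φ : G → ℤ} (hf : IsHeckeElt H f) (hφ : IsCc H φ) : IsCc H (hconv H φ f) := by
  obtain ⟨hfl, hfr, C, hC⟩ := hf
  constructor
  · intro h hh x
    unfold hconv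
    apply finsum_congr; intro y
    congr 1
    rw [← mul_assoc, hfr h hh]
  · apply Set.Finite.subset
      (Set.Finite.biUnion hφ.2 fun y _ =>
        Set.Finite.biUnion C.finite_toSet fun c _ =>
          ((hfin c).image (fun q => Quotient.out y • q)))
    intro z hz
    simp only [Set.mem_setOf_eq] at hz
    have hexists : ∃ y : G ⧸ H,
        φ (Quotient.out y) * f ((Quotient.out y)⁻¹ * Quotient.out z) ≠ 0 := by
      by_contra hc
      push_neg at hc
      exact hz (finsum_eq_zero_of_forall_eq_zero hc)
    obtain ⟨y, hy⟩ := hexists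
    have hφy : φ (Quotient.out y) ≠ 0 := fun h0 => hy (by simp [h0])
    have hfy : f ((Quotient.out y)⁻¹ * Quotient.out z) ≠ 0 := fun h0 => hy (by simp [h0])
    obtain ⟨c, hcC, hmem⟩ := hC _ hfy
    refine Set.mem_biUnion hφy (Set.mem_biUnion hcC ?_)
    refine ⟨QuotientGroup.mk ((Quotient.out y)⁻¹ * Quotient.out z),
      Set.mem_image_of_mem _ hmem, ?_⟩
    show Quotient.out y • (QuotientGroup.mk ((Quotient.out y)⁻¹ * Quotient.out z)) = z
    rw [MulAction.Quotient.smul_mk, smul_eq_mul, mul_inv_cancel_left, QuotientGroup.out_eq']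

lemma hconv_add {f φ φ' : G → ℤ} (hφ : IsCc H φ) (hφ' : IsCc H φ') :
    hconv H (φ + φ') f = hconv H φ f + hconv H φ' f := by
  funext x
  unfold hconv
  simp only [Pi.add_apply, add_mul]
  exact finsum_add_distrib (Set.Finite.subset hφ.2 (supp_subset φ f x))
    (Set.Finite.subset hφ'.2 (supp_subset φ' f x))

lemma hconv_translate {f φ : G → ℤ} (hf : IsHeckeElt H f) (g : G) (hφ : IsCc H φ) :
    hconv H (fun x => φ (g⁻¹ * x)) f = fun x => hconv H φ f (g⁻¹ * x) := by
  funext x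
  unfold hconv
  rw [← finsum_comp_equiv (MulAction.toPerm g⁻¹ : Equiv.Perm (G ⧸ H))
      (f := fun y : G ⧸ H => φ (Quotient.out y) * f ((Quotient.out y)⁻¹ * (g⁻¹ * x)))]
  apply finsum_congr; intro z
  simp only [MulAction.toPerm_apply]
  have hL : φ (g⁻¹ * Quotient.out z) * f ((Quotient.out z)⁻¹ * x)
      = φ (g⁻¹ * Quotient.out z) * f ((g⁻¹ * Quotient.out z)⁻¹ * (g⁻¹ * x)) := by
    congr 2; group
  rw [hL]
  have hmk : (QuotientGroup.mk (g⁻¹ * Quotient.out z) : G ⧸ H)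
      = QuotientGroup.mk (Quotient.out (g⁻¹ • z)) := by
    rw [QuotientGroup.out_eq', ← smul_eq_mul, MulAction.Quotient.mk_smul_out]
  exact term_eq hφ.1 hf.1 hmk (g⁻¹ * x)

lemma cc_zero : IsCc H (0 : G → ℤ) := by
  refine ⟨fun h hh g => rfl, Set.Finite.subset (Set.finite_empty) ?_⟩
  intro y hy
  simp at hy

lemma cc_add {φ φ' : G → ℤ} (hφ : IsCc H φ) (hφ' : IsCc H φ') : IsCc H (φ + φ') := by
  refine ⟨fun h hh g => by simp only [Pi.add_apply, hφ.1 h hh g, hφ'.1 h hh g],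
    Set.Finite.subset (hφ.2.union hφ'.2) ?_⟩
  intro y hy
  simp only [Set.mem_setOf_eq, Pi.add_apply] at hy
  by_contra hc
  simp only [Set.mem_union, Set.mem_setOf_eq, not_or, not_not] at hc
  rw [hc.1, hc.2] at hy
  exact hy rfl

lemma cc_smul (c : ℤ) {φ : G → ℤ} (hφ : IsCc H φ) : IsCc H (c • φ) := by
  refine ⟨fun h hh g => by simp only [Pi.smul_apply, hφ.1 h hh g],
    Set.Finite.subset hφ.2 ?_⟩
  intro y hy
  simp only [Set.mem_setOf_eq, Pi.smul_apply, smul_eq_mul] at hy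
  exact fun h0 => hy (by simp [h0])

lemma cc_neg {φ : G → ℤ} (hφ : IsCc H φ) : IsCc H (-φ) := by
  have := cc_smul (-1) hφ
  simpa using this

section Maps
variable {F : (G → ℤ) → (G → ℤ)}
  (hadd : ∀ φ φ' : G → ℤ, IsCc H φ → IsCc H φ' → F (φ + φ') = F φ + F φ')

include hadd

lemma F_zero : F 0 = 0 := by
  have h := hadd 0 0 cc_zero cc_zero
  rw [add_zero] at h
  exact (left_eq_add.mp h)

lemma F_neg {φ : G → ℤ} (hφ : IsCc H φ) : F (-φ) = -F φ := by
  have h := hadd φ (-φ) hφ (cc_neg hφ)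
  rw [add_neg_cancel, F_zero hadd] at h
  exact eq_neg_of_add_eq_zero_right h.symm

lemma F_smul (c : ℤ) {φ : G → ℤ} (hφ : IsCc H φ) : F (c • φ) = c • F φ := by
  induction c using Int.induction_on with
  | zero => rw [zero_smul, zero_smul, F_zero hadd]
  | succ n ihn =>
    have : ((n : ℤ) + 1) • φ = (n : ℤ) • φ + φ := by rw [add_smul, one_smul]
    rw [this, hadd _ _ (cc_smul _ hφ) hφ, ihn, add_smul, one_smul]
  | pred n ihn =>
    have : (-(n : ℤ) - 1) • φ = (-(n : ℤ)) • φ + (-φ) := by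
      rw [sub_smul, one_smul, sub_eq_add_neg]
    rw [this, hadd _ _ (cc_smul _ hφ) (cc_neg hφ), ihn, F_neg hadd hφ, sub_smul, one_smul,
      sub_eq_add_neg]

end Maps

/-- Two additive, `G`-equivariant operators on `C_c(G/H)` agreeing on the indicator of `H`
agree everywhere. -/
lemma F_ext {F₁ F₂ : (G → ℤ) → (G → ℤ)}
    (h₁add : ∀ φ φ' : G → ℤ, IsCc H φ → IsCc H φ' → F₁ (φ + φ') = F₁ φ + F₁ φ')
    (h₂add : ∀ φ φ' : G → ℤ, IsCc H φ → IsCc H φ' → F₂ (φ + φ') = F₂ φ + F₂ φ')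
    (h₁eq : ∀ g : G, ∀ φ : G → ℤ, IsCc H φ →
      F₁ (fun x => φ (g⁻¹ * x)) = fun x => F₁ φ (g⁻¹ * x))
    (h₂eq : ∀ g : G, ∀ φ : G → ℤ, IsCc H φ →
      F₂ (fun x => φ (g⁻¹ * x)) = fun x => F₂ φ (g⁻¹ * x))
    (hbase : F₁ (hind H 1) = F₂ (hind H 1)) :
    ∀ φ : G → ℤ, IsCc H φ → F₁ φ = F₂ φ := by
  suffices key : ∀ n : ℕ, ∀ φ : G → ℤ, ∀ hφ : IsCc H φ, (hφ.2.toFinset).card ≤ n →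
      F₁ φ = F₂ φ by
    intro φ hφ; exact key _ φ hφ le_rfl
  intro n
  induction n with
  | zero =>
    intro φ hφ hcard
    have hzero : φ = 0 := by
      funext x
      obtain ⟨h, hx⟩ := QuotientGroup.mk_out_eq_mul H x
      have h1 : φ (Quotient.out (QuotientGroup.mk x : G ⧸ H)) = φ x := by
        rw [hx]; exact hφ.1 h h.2 x
      by_contra h0
      have hmem : (QuotientGroup.mk x : G ⧸ H) ∈ hφ.2.toFinset := by
        rw [Set.Finite.mem_toFinset]
        simpa [h1] using h0
      rw [Finset.card_eq_zero.mp (Nat.le_zero.mp hcard)] at hmem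
      exact absurd hmem (Finset.notMem_empty _)
    rw [hzero, F_zero h₁add, F_zero h₂add]
  | succ n ih =>
    intro φ hφ hcard
    by_cases hle : (hφ.2.toFinset).card ≤ n
    · exact ih φ hφ hle
    · have hpos : 0 < (hφ.2.toFinset).card := by omega
      obtain ⟨y₀, hy₀⟩ := Finset.card_pos.mp hpos
      have hy₀' : φ (Quotient.out y₀) ≠ 0 := by
        rwa [Set.Finite.mem_toFinset, Set.mem_setOf_eq] at hy₀
      set c : ℤ := φ (Quotient.out y₀) with hcdef
      set χ : G → ℤ := hind H (Quotient.out y₀) with hχdef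
      have hχ : IsCc H χ := isCc_hind _
      set ψ : G → ℤ := φ + (-c) • χ with hψdef
      have hψcc : IsCc H ψ := cc_add hφ (cc_smul _ hχ)
      have hχout : ∀ y : G ⧸ H, χ (Quotient.out y) = if y = y₀ then 1 else 0 := by
        intro y
        rw [hχdef, hind_out, QuotientGroup.out_eq']
      have hψout : ∀ y : G ⧸ H, ψ (Quotient.out y)
          = if y = y₀ then 0 else φ (Quotient.out y) := by
        intro y
        rw [hψdef]
        simp only [Pi.add_apply, Pi.smul_apply, smul_eq_mul, hχout y]
        by_cases hy : y = y₀
        · rw [if_pos hy, if_pos hy, mul_one, hy, hcdef]; ring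
        · rw [if_neg hy, if_neg hy, mul_zero]; ring
      have hsub : hψcc.2.toFinset ⊆ hφ.2.toFinset.erase y₀ := by
        intro y hy
        rw [Set.Finite.mem_toFinset, Set.mem_setOf_eq, hψout] at hy
        by_cases h : y = y₀
        · simp [h] at hy
        · rw [if_neg h] at hy
          exact Finset.mem_erase.mpr ⟨h, by rwa [Set.Finite.mem_toFinset, Set.mem_setOf_eq]⟩
      have hψcard : (hψcc.2.toFinset).card ≤ n := by
        have := Finset.card_le_card hsub
        rw [Finset.card_erase_of_mem hy₀] at this
        omega
      have hφeq : φ = ψ + c • χ := by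
        funext x
        simp only [hψdef, Pi.add_apply, Pi.smul_apply, smul_eq_mul, neg_mul]
        ring
      have hχeq : F₁ χ = F₂ χ := by
        have hχrepr : χ = fun x => hind H 1 ((Quotient.out y₀)⁻¹ * x) := by
          funext x
          simp [hχdef, hind]
        rw [hχrepr, h₁eq _ _ (isCc_hind 1), h₂eq _ _ (isCc_hind 1), hbase]
      calc F₁ φ = F₁ (ψ + c • χ) := by rw [← hφeq]
        _ = F₁ ψ + F₁ (c • χ) := h₁add _ _ hψcc (cc_smul _ hχ)
        _ = F₂ ψ + c • F₁ χ := by rw [ih ψ hψcc hψcard, F_smul h₁add c hχ]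
        _ = F₂ ψ + c • F₂ χ := by rw [hχeq]
        _ = F₂ ψ + F₂ (c • χ) := by rw [F_smul h₂add c hχ]
        _ = F₂ (ψ + c • χ) := (h₂add _ _ hψcc (cc_smul _ hχ)).symm
        _ = F₂ φ := by rw [← hφeq]

lemma isHecke_of {f : G → ℤ} (hl : ∀ h ∈ H, ∀ g : G, f (h * g) = f g) (hc : IsCc H f) :
    IsHeckeElt H f := by
  refine ⟨hl, hc.1, hc.2.toFinset.image Quotient.out, ?_⟩
  intro g hg
  obtain ⟨h, hh⟩ := QuotientGroup.mk_out_eq_mul H g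
  set c : G := Quotient.out (QuotientGroup.mk g : G ⧸ H) with hcdef
  have h1 : f c ≠ 0 := by
    rw [hh, hc.1 h h.2 g]; exact hg
  have hmem : (QuotientGroup.mk g : G ⧸ H) ∈ hc.2.toFinset := by
    rw [Set.Finite.mem_toFinset]; exact h1
  refine ⟨c, Finset.mem_image_of_mem _ hmem, ?_⟩
  have hgeq : g = (1 * c) * (↑h)⁻¹ := by
    rw [one_mul, hh, mul_inv_cancel_right]
  rw [hgeq]
  exact Set.mul_mem_mul (Set.mul_mem_mul H.one_mem (Set.mem_singleton c)) (inv_mem h.2)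

lemma cc_of_hecke (hfin : ∀ g : G,
      (QuotientGroup.mk '' ((H : Set G) * {g} * (H : Set G)) : Set (G ⧸ H)).Finite)
    {f : G → ℤ} (hf : IsHeckeElt H f) : IsCc H f := by
  refine ⟨hf.2.1, ?_⟩
  obtain ⟨C, hC⟩ := hf.2.2
  apply Set.Finite.subset (Set.Finite.biUnion C.finite_toSet fun c _ => hfin c)
  intro y hy
  obtain ⟨c, hc, hm⟩ := hC _ hy
  exact Set.mem_biUnion hc ⟨_, hm, QuotientGroup.out_eq' y⟩

/-- left translation invariance transfers through `hconv`. -/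
lemma hconv_left_inv (hfin : ∀ g : G,
      (QuotientGroup.mk '' ((H : Set G) * {g} * (H : Set G)) : Set (G ⧸ H)).Finite)
    {f₁ f₂ : G → ℤ} (hf₁ : IsHeckeElt H f₁) (hf₂ : IsHeckeElt H f₂) :
    IsHeckeElt H (hconv H f₁ f₂) := by
  apply isHecke_of
  · intro h hh x
    have key := hconv_translate (H := H) hf₂ h⁻¹ (cc_of_hecke hfin hf₁)
    simp only [inv_inv] at key
    have harg : (fun x => f₁ (h * x)) = f₁ := by
      funext z; exact hf₁.1 h hh z
    rw [harg] at key
    exact (congrFun key x).symm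
  · exact isCc_hconv hfin hf₂ (cc_of_hecke hfin hf₁)

end Aux

/-- The map `h ↦ e_h := (φ ↦ φ ⋆ h)` is a bijection from `H(G,H)` onto the `ℤ`-linear
`G`-equivariant endomorphisms of `C_c(G/H)`, satisfying `e_{h₁ ⋆ h₂} = e_{h₂} ∘ e_{h₁}`;
i.e. `H(G,H)` is isomorphic to the opposite ring of `End_{ℤ[G]} C_c(G/H)`. -/
theorem hecke_ring_eq_opposite_equivariant_endomorphisms {G : Type} [Group G]
    (H : Subgroup G)
    (hfin : ∀ g : G,
      (QuotientGroup.mk '' ((H : Set G) * {g} * (H : Set G)) : Set (G ⧸ H)).Finite) :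
    -- `e_h` maps `C_c(G/H)` to itself
    (∀ f : G → ℤ, IsHeckeElt H f → ∀ φ : G → ℤ, IsCc H φ → IsCc H (hconv H φ f)) ∧
    -- `e_h` is additive (hence `ℤ`-linear)
    (∀ f : G → ℤ, IsHeckeElt H f → ∀ φ φ' : G → ℤ, IsCc H φ → IsCc H φ' →
        hconv H (φ + φ') f = hconv H φ f + hconv H φ' f) ∧
    -- `e_h` commutes with the left translation action of `G`
    (∀ f : G → ℤ, IsHeckeElt H f → ∀ g : G, ∀ φ : G → ℤ, IsCc H φ →
        hconv H (fun x => φ (g⁻¹ * x)) f = fun x => hconv H φ f (g⁻¹ * x)) ∧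
    -- `h ↦ e_h` is injective
    (∀ f f' : G → ℤ, IsHeckeElt H f → IsHeckeElt H f' →
        (∀ φ : G → ℤ, IsCc H φ → hconv H φ f = hconv H φ f') → f = f') ∧
    -- `h ↦ e_h` is surjective onto the `ℤ`-linear `G`-equivariant endomorphisms
    (∀ E : (G → ℤ) → (G → ℤ),
        (∀ φ : G → ℤ, IsCc H φ → IsCc H (E φ)) →
        (∀ φ φ' : G → ℤ, IsCc H φ → IsCc H φ' → E (φ + φ') = E φ + E φ') →
        (∀ g : G, ∀ φ : G → ℤ, IsCc H φ →
          E (fun x => φ (g⁻¹ * x)) = fun x => E φ (g⁻¹ * x)) →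
        ∃ f : G → ℤ, IsHeckeElt H f ∧ ∀ φ : G → ℤ, IsCc H φ → E φ = hconv H φ f) ∧
    -- `e_{h₁ ⋆ h₂} = e_{h₂} ∘ e_{h₁}` (the isomorphism reverses multiplication)
    (∀ f₁ f₂ : G → ℤ, IsHeckeElt H f₁ → IsHeckeElt H f₂ → ∀ φ : G → ℤ, IsCc H φ →
        hconv H φ (hconv H f₁ f₂) = hconv H (hconv H φ f₁) f₂) := by

  refine ⟨fun f hf φ hφ => isCc_hconv hfin hf hφ,
    fun f hf φ φ' hφ hφ' => hconv_add hφ hφ',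
    fun f hf g φ hφ => hconv_translate hf g hφ, ?_, ?_, ?_⟩
  · -- injectivity
    intro f f' hf hf' hagree
    have h := hagree (hind H 1) (isCc_hind 1)
    rwa [hconv_hind_one hf.1, hconv_hind_one hf'.1] at h
  · -- surjectivity
    intro E hCc hadd heqv
    have hflinv : ∀ h ∈ H, ∀ x : G, E (hind H 1) (h * x) = E (hind H 1) x := by
      intro h hh x
      have key := heqv h⁻¹ (hind H 1) (isCc_hind 1)
      simp only [inv_inv] at key
      have harg : (fun x => hind H 1 (h * x)) = hind H 1 := by
        funext z; exact hind_one_left_inv h hh z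
      rw [harg] at key
      exact (congrFun key x).symm
    have hfH : IsHeckeElt H (E (hind H 1)) := isHecke_of hflinv (hCc _ (isCc_hind 1))
    refine ⟨E (hind H 1), hfH, ?_⟩
    exact F_ext (F₁ := E) (F₂ := fun φ => hconv H φ (E (hind H 1))) hadd
      (fun φ φ' hφ hφ' => hconv_add hφ hφ') heqv
      (fun g φ hφ => hconv_translate hfH g hφ)
      (hconv_hind_one hfH.1).symm
  · -- compatibility with convolution
    intro f₁ f₂ hf₁ hf₂ φ hφ
    have h12 : IsHeckeElt H (hconv H f₁ f₂) := hconv_left_inv hfin hf₁ hf₂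
    refine F_ext (F₁ := fun φ => hconv H φ (hconv H f₁ f₂))
      (F₂ := fun φ => hconv H (hconv H φ f₁) f₂) ?_ ?_ ?_ ?_ ?_ φ hφ
    · exact fun φ φ' hφ hφ' => hconv_add hφ hφ'
    · intro φ φ' hφ hφ'
      rw [hconv_add hφ hφ', hconv_add (isCc_hconv hfin hf₁ hφ) (isCc_hconv hfin hf₁ hφ')]
    · exact fun g φ hφ => hconv_translate h12 g hφ
    · intro g φ hφ
      rw [hconv_translate hf₁ g hφ, hconv_translate hf₂ g (isCc_hconv hfin hf₁ hφ)]
    · rw [hconv_hind_one h12.1, hconv_hind_one hf₁.1]
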